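/- Let K be a field, S = K[x_1,…,x_n], and let B = B(0,b|α,β) be the PLP base set of type (0,b|α,β) (so a = 0). Order monomials by the lexicographic order with x_1 > x_2 > ⋯ > x_n. Fix t ∈ B and let J be the ideal of S generated by all monomials x^u with u ∈ B and x^u >_lex x^t. Then: (a) x_n · x^t ∉ J; (b) for each 1 ≤ i ≤ n−1, one has x_i · x^t ∈ J if and only if t_i < b_i and t_1+⋯+t_i < β_i. -/

import Mathlib

open Finset MvPolynomial

/-- `x^u >_lex x^v`: at the smallest index where they differ, `u` is bigger. -/
def lexGt {n : ℕ} (u v : Fin n → ℕ) : Prop :=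
  ∃ i : Fin n, v i < u i ∧ ∀ j : Fin n, j < i → u j = v j

lemma prod_pow_eq_monomial_aux {K : Type*} [Field K] {n : ℕ} (u : Fin n → ℕ) :
    (∏ i, (X i : MvPolynomial (Fin n) K) ^ u i) =
      monomial (Finsupp.equivFunOnFinite.symm u) 1 := by
  rw [← prod_X_pow_eq_monomial]
  rw [show ((Finsupp.equivFunOnFinite.symm u : Fin n →₀ ℕ) : Fin n → ℕ) = u from rfl]
  refine (Finset.prod_subset (Finset.subset_univ _) fun x _ hx => ?_).symm
  simp only [Finsupp.notMem_support_iff] at hx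
  rw [show (Finsupp.equivFunOnFinite.symm u : Fin n →₀ ℕ) x = u x from rfl] at hx
  simp [hx]

lemma crit_aux {K : Type*} [Field K] {n : ℕ} (B : Set (Fin n → ℕ)) (t : Fin n → ℕ) (i : Fin n) :
    ((X i : MvPolynomial (Fin n) K) * (∏ l, (X l : MvPolynomial (Fin n) K) ^ t l) ∈
      Ideal.span { m : MvPolynomial (Fin n) K | ∃ u ∈ B, lexGt u t ∧
        m = ∏ l, (X l : MvPolynomial (Fin n) K) ^ u l }) ↔
    ∃ u ∈ B, lexGt u t ∧ ∀ l, u l ≤ t l + (if l = i then 1 else 0) := by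
  classical
  have hgen : { m : MvPolynomial (Fin n) K | ∃ u ∈ B, lexGt u t ∧
        m = ∏ l, (X l : MvPolynomial (Fin n) K) ^ u l } =
      (fun s => monomial s (1 : K)) ''
        (Finsupp.equivFunOnFinite.symm '' {u | u ∈ B ∧ lexGt u t}) := by
    ext m
    constructor
    · rintro ⟨u, hu, hl, rfl⟩
      exact ⟨_, ⟨u, ⟨hu, hl⟩, rfl⟩, (prod_pow_eq_monomial_aux u).symm⟩
    · rintro ⟨s, ⟨u, ⟨hu, hl⟩, rfl⟩, rfl⟩
      exact ⟨u, hu, hl, (prod_pow_eq_monomial_aux u).symm⟩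
  have hx : (X i : MvPolynomial (Fin n) K) * (∏ l, (X l : MvPolynomial (Fin n) K) ^ t l) =
      monomial (Finsupp.single i 1 + Finsupp.equivFunOnFinite.symm t) 1 := by
    rw [prod_pow_eq_monomial_aux t, monomial_single_add, pow_one]
  rw [hgen, hx, mem_ideal_span_monomial_image]
  rw [support_monomial, if_neg (one_ne_zero)]
  constructor
  · intro h
    obtain ⟨si, ⟨u, ⟨hu, hl⟩, rfl⟩, hle⟩ := h _ (Finset.mem_singleton_self _)
    refine ⟨u, hu, hl, fun l => ?_⟩
    have := hle l
    simp only [Finsupp.coe_add, Pi.add_apply, Finsupp.single_apply] at this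
    rw [show (Finsupp.equivFunOnFinite.symm u : Fin n →₀ ℕ) l = u l from rfl] at this
    rw [show (Finsupp.equivFunOnFinite.symm t : Fin n →₀ ℕ) l = t l from rfl] at this
    rcases eq_or_ne l i with rfl | h
    · simp only [if_pos rfl] at this ⊢; omega
    · simp only [if_neg h, if_neg (Ne.symm h)] at this ⊢; omega
  · rintro ⟨u, hu, hl, hle⟩ xi hxi
    rw [Finset.mem_singleton] at hxi
    subst hxi
    refine ⟨_, ⟨u, ⟨hu, hl⟩, rfl⟩, fun l => ?_⟩
    simp only [Finsupp.coe_add, Pi.add_apply, Finsupp.single_apply]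
    rw [show (Finsupp.equivFunOnFinite.symm u : Fin n →₀ ℕ) l = u l from rfl]
    rw [show (Finsupp.equivFunOnFinite.symm t : Fin n →₀ ℕ) l = t l from rfl]
    have := hle l
    rcases eq_or_ne l i with rfl | h
    · simp only [if_pos rfl] at this ⊢; omega
    · simp only [if_neg h, if_neg (Ne.symm h)] at this ⊢; omega

/-- linear quotients of a PLP-polymatroidal ideal of type
`(0,b|α,β)` with respect to the lexicographic order. -/
theorem PLP_linear_quotients (K : Type*) [Field K] {n d : ℕ} (hn : 0 < n) (hd : 0 < d)
    (b α β : Fin n → ℕ)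
    (hαm : Monotone α) (hβm : Monotone β)
    (hlast : ∀ i : Fin n, (i : ℕ) = n - 1 → α i = d ∧ β i = d)
    (hαβ : ∀ i, α i ≤ β i)
    (B : Set (Fin n → ℕ))
    (hB : B = { u : Fin n → ℕ | ∀ i : Fin n,
      u i ≤ b i ∧ α i ≤ ∑ j ∈ Finset.Iic i, u j ∧ (∑ j ∈ Finset.Iic i, u j) ≤ β i })
    (t : Fin n → ℕ) (ht : t ∈ B)
    (J : Ideal (MvPolynomial (Fin n) K))
    (hJ : J = Ideal.span { m : MvPolynomial (Fin n) K | ∃ u ∈ B, lexGt u t ∧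
      m = ∏ i, (X i : MvPolynomial (Fin n) K) ^ u i }) :
    (∀ i : Fin n, (i : ℕ) = n - 1 →
      (X i : MvPolynomial (Fin n) K) * (∏ l, (X l : MvPolynomial (Fin n) K) ^ t l) ∉ J) ∧
    (∀ i : Fin n, (i : ℕ) < n - 1 →
      ((X i : MvPolynomial (Fin n) K) * (∏ l, (X l : MvPolynomial (Fin n) K) ^ t l) ∈ J ↔
        t i < b i ∧ (∑ j ∈ Finset.Iic i, t j) < β i)) := by
  classical
  subst hJ
  have htB := ht
  rw [hB] at htB
  simp only [Set.mem_setOf_eq] at htB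
  have hfirst : ∀ (i : Fin n) (u : Fin n → ℕ), lexGt u t →
      (∀ l, u l ≤ t l + (if l = i then 1 else 0)) →
      u i = t i + 1 ∧ (∀ l, l < i → u l = t l) ∧
        ∑ l ∈ Finset.Iic i, u l = (∑ l ∈ Finset.Iic i, t l) + 1 := by
    intro i u hlex hle
    obtain ⟨j, hj1, hj2⟩ := hlex
    have hji : j = i := by
      by_contra h
      have := hle j
      rw [if_neg h] at this; omega
    subst hji
    have hui : u j = t j + 1 := by have := hle j; rw [if_pos rfl] at this; omega
    refine ⟨hui, hj2, ?_⟩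
    have hcong : ∀ l ∈ Finset.Iic j, u l = t l + if l = j then 1 else 0 := by
      intro l hl
      rcases eq_or_ne l j with rfl | h
      · simp [hui]
      · simp [h, hj2 l (lt_of_le_of_ne (Finset.mem_Iic.1 hl) h)]
    rw [Finset.sum_congr rfl hcong, Finset.sum_add_distrib,
      Finset.sum_ite_eq' (Finset.Iic j) j (fun _ => 1), if_pos (Finset.mem_Iic.2 le_rfl)]
  constructor
  · -- part (a)
    intro i hi hmem
    rw [crit_aux] at hmem
    obtain ⟨u, hu, hlex, hle⟩ := hmem
    rw [hB] at hu
    simp only [Set.mem_setOf_eq] at hu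
    obtain ⟨_, _, hsum⟩ := hfirst i u hlex hle
    have h1 := (htB i).2.1
    have h2 := (hu i).2.2
    have hαd := (hlast i hi).1
    have hβd := (hlast i hi).2
    omega
  · -- part (b)
    intro i hi
    rw [crit_aux]
    have hlastlt : n - 1 < n := by omega
    set lst : Fin n := ⟨n - 1, hlastlt⟩ with hlst
    have hle_lst : ∀ x : Fin n, x ≤ lst := by
      intro x; rw [Fin.le_def]; exact Nat.le_sub_one_of_lt x.isLt
    have hαd := (hlast lst rfl).1
    have hβd := (hlast lst rfl).2
    have htd : ∑ l ∈ Finset.Iic lst, t l = d := by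
      have h1 := (htB lst).2.1
      have h2 := (htB lst).2.2
      omega
    have hilst : i < lst := by rw [Fin.lt_def]; exact hi
    have hβid : β i ≤ d := hβd ▸ hβm (le_of_lt hilst)
    constructor
    · rintro ⟨u, hu, hlex, hle⟩
      rw [hB] at hu
      simp only [Set.mem_setOf_eq] at hu
      obtain ⟨hui, _, hsum⟩ := hfirst i u hlex hle
      have h1 := (hu i).1
      have h2 := (hu i).2.2
      constructor <;> omega
    · rintro ⟨hbi, hβi⟩
      have hne : (Finset.univ.filter fun k => i < k ∧ 0 < t k).Nonempty := by
        by_contra h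
        rw [Finset.not_nonempty_iff_eq_empty, Finset.filter_eq_empty_iff] at h
        have hzero : ∀ x : Fin n, i < x → t x = 0 := by
          intro x hx
          have := h (Finset.mem_univ x)
          by_contra h2
          exact this ⟨hx, Nat.pos_of_ne_zero h2⟩
        have hEq : ∑ l ∈ Finset.Iic lst, t l = ∑ l ∈ Finset.Iic i, t l := by
          refine (Finset.sum_subset (fun x _ => Finset.mem_Iic.2 (hle_lst x)) ?_).symm
          intro x _ hx
          exact hzero x (lt_of_not_ge fun h' => hx (Finset.mem_Iic.2 h'))
        omega
      set k := Finset.min' _ hne with hkdef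
      have hkmem := Finset.min'_mem _ hne
      rw [Finset.mem_filter] at hkmem
      have hik : i < k := hkmem.2.1
      have htk : 0 < t k := hkmem.2.2
      have hkmin : ∀ l, i < l → 0 < t l → k ≤ l := by
        intro l h1 h2
        exact Finset.min'_le _ _ (Finset.mem_filter.2 ⟨Finset.mem_univ _, h1, h2⟩)
      have hmid : ∀ l, i < l → l < k → t l = 0 := by
        intro l h1 h2
        by_contra h3
        exact absurd (hkmin l h1 (Nat.pos_of_ne_zero h3)) (not_le.2 h2)
      set u : Fin n → ℕ := fun l => if l = i then t i + 1 else if l = k then t k - 1 else t l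
        with hudef
      have hine : i ≠ k := ne_of_lt hik
      have hui : u i = t i + 1 := by simp [hudef]
      have huk : u k = t k - 1 := by simp [hudef, Ne.symm hine]
      have huo : ∀ l, l ≠ i → l ≠ k → u l = t l := by intro l h1 h2; simp [hudef, h1, h2]
      have hkey : ∀ s : Finset (Fin n),
          (∑ l ∈ s, u l) + (if k ∈ s then 1 else 0) =
          (∑ l ∈ s, t l) + (if i ∈ s then 1 else 0) := by
        intro s
        rw [← Finset.sum_ite_eq' s k (fun _ => 1), ← Finset.sum_ite_eq' s i (fun _ => 1),
          ← Finset.sum_add_distrib, ← Finset.sum_add_distrib]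
        refine Finset.sum_congr rfl fun l _ => ?_
        rcases eq_or_ne l i with rfl | h1
        · rw [hui, if_neg hine, if_pos rfl]
          omega
        · rcases eq_or_ne l k with rfl | h2
          · rw [huk, if_pos rfl, if_neg h1]
            omega
          · rw [huo l h1 h2, if_neg h2, if_neg h1]
      refine ⟨u, ?_, ⟨i, ?_, ?_⟩, ?_⟩
      · -- u ∈ B
        rw [hB]
        simp only [Set.mem_setOf_eq]
        intro j
        have hbj : u j ≤ b j := by
          rcases eq_or_ne j i with rfl | h1
          · rw [hui]; omega
          · rcases eq_or_ne j k with rfl | h2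
            · rw [huk]; have := (htB k).1; omega
            · rw [huo j h1 h2]; exact (htB j).1
        have hs := hkey (Finset.Iic j)
        have hbnd : α j ≤ ∑ l ∈ Finset.Iic j, u l ∧ (∑ l ∈ Finset.Iic j, u l) ≤ β j := by
          by_cases hij : i ≤ j
          · by_cases hkj : k ≤ j
            · rw [if_pos (Finset.mem_Iic.2 hkj), if_pos (Finset.mem_Iic.2 hij)] at hs
              obtain ⟨hA, hBd⟩ := (htB j).2
              constructor <;> omega
            · have hnk : k ∉ Finset.Iic j := fun h => hkj (Finset.mem_Iic.1 h)
              rw [if_neg hnk, if_pos (Finset.mem_Iic.2 hij)] at hs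
              have hEq : ∑ l ∈ Finset.Iic j, t l = ∑ l ∈ Finset.Iic i, t l := by
                refine (Finset.sum_subset (Finset.Iic_subset_Iic.2 hij) ?_).symm
                intro x hx hx2
                exact hmid x (lt_of_not_ge fun h' => hx2 (Finset.mem_Iic.2 h'))
                  (lt_of_le_of_lt (Finset.mem_Iic.1 hx) (lt_of_not_ge hkj))
              have hβij : β i ≤ β j := hβm hij
              obtain ⟨hA, hBd⟩ := (htB j).2
              constructor <;> omega
          · have hnk : k ∉ Finset.Iic j := fun h =>
              hij (le_of_lt (lt_of_lt_of_le hik (Finset.mem_Iic.1 h)))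
            have hni : i ∉ Finset.Iic j := fun h => hij (Finset.mem_Iic.1 h)
            rw [if_neg hnk, if_neg hni] at hs
            obtain ⟨hA, hBd⟩ := (htB j).2
            constructor <;> omega
        exact ⟨hbj, hbnd.1, hbnd.2⟩
      · rw [hui]; omega
      · intro j hj
        exact huo j (ne_of_lt hj) (ne_of_lt (lt_trans hj hik))
      · intro l
        rcases eq_or_ne l i with rfl | h1
        · rw [hui, if_pos rfl]
        · rw [if_neg h1]
          rcases eq_or_ne l k with rfl | h2
          · rw [huk]; omega
          · rw [huo l h1 h2]; omega
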